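/- arXiv:math/0510431 — 2 statements merged into one kernel-verified Lean document; each statement's English description precedes it below -/
import Mathlib

section
/- Let F be a field of characteristic 2 and n a positive integer. Let W' be the Lie algebra over F with basis E_i for i = −1, 0, …, 2^{n+1}−3, and bracket [E_i, E_j] = (C(i+j+1,j) − C(i+j+1,i))·E_{i+j} (coefficients taken modulo 2), with the convention E_k = 0 for k < −1 or k > 2^{n+1}−3 (W' is the simple Zassenhaus algebra of dimension 2^{n+1}−1, the derived subalgebra of W(1:n+1)). Then the F-linear map H(2:(1,n);ω₂) → W' defined on basis elements by x·y^{(j)} ↦ E_{j−1} for 0 ≤ j ≤ 2^n−1 and y^{(j)} ↦ E_{j+2^n−2} for 1 ≤ j ≤ 2^n−1 is an isomorphism of Lie algebras. -/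
/-- Integer binomial coefficient, zero when either entry is negative. -/
def ichoose (n k : ℤ) : ℤ := if 0 ≤ n ∧ 0 ≤ k then (n.toNat.choose k.toNat : ℤ) else 0

/-- The structure constant `N(i,j,k,l)` of the Hamiltonian algebra `H(2:(n₁,n₂);ω₂)`. -/
def hamN (i j k l : ℤ) : ℤ :=
  ichoose (i + k - 1) i * ichoose (j + l - 1) (j - 1) -
    ichoose (i + k - 1) (i - 1) * ichoose (j + l - 1) j

lemma ichoose_natCast (a b : ℕ) : ichoose a b = (a.choose b : ℤ) := by
  simp [ichoose]

lemma ichoose_of_neg_left {a : ℤ} (b : ℤ) (h : a < 0) : ichoose a b = 0 := by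
  simp [ichoose, not_le.mpr h]

lemma ichoose_of_neg_right (a : ℤ) {b : ℤ} (h : b < 0) : ichoose a b = 0 := by
  simp [ichoose, not_le.mpr h]

lemma ichoose_zero_right {a : ℤ} (h : 0 ≤ a) : ichoose a 0 = 1 := by
  simp [ichoose, h]

lemma ichoose_self {a : ℤ} (h : 0 ≤ a) : ichoose a a = 1 := by
  simp [ichoose, h, Nat.choose_self]

lemma ichoose_eq_zero_of_lt {a b : ℤ} (h0 : 0 ≤ a) (h : a < b) : ichoose a b = 0 := by
  have hb : 0 ≤ b := le_of_lt (lt_of_le_of_lt h0 h)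
  rw [ichoose, if_pos ⟨h0, hb⟩, Nat.choose_eq_zero_of_lt (by omega)]
  simp

lemma ichoose_symm {a : ℤ} (b : ℤ) (ha : 0 ≤ a) : ichoose a b = ichoose a (a - b) := by
  rcases lt_or_ge b 0 with hb | hb
  · rw [ichoose_of_neg_right a hb, ichoose_eq_zero_of_lt ha (by omega)]
  rcases le_or_gt b a with hba | hba
  · rw [ichoose, if_pos ⟨ha, hb⟩, ichoose, if_pos ⟨ha, by omega⟩]
    have h1 : (a - b).toNat = a.toNat - b.toNat := by omega
    have h2 : b.toNat ≤ a.toNat := by omega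
    rw [h1, Nat.choose_symm h2]
  · rw [ichoose_eq_zero_of_lt ha hba, ichoose_of_neg_right a (by omega)]

lemma ichoose_pascal {a b : ℤ} (ha : 0 ≤ a) (hb : 0 ≤ b) :
    ichoose (a + 1) b = ichoose a b + ichoose a (b - 1) := by
  rcases eq_or_lt_of_le hb with hb0 | hb1
  · rw [← hb0, ichoose_zero_right (by omega), ichoose_zero_right ha,
      ichoose_of_neg_right a (by omega)]
    ring
  · rw [ichoose, if_pos ⟨by omega, hb⟩, ichoose, if_pos ⟨ha, hb⟩, ichoose,
      if_pos ⟨ha, by omega⟩]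
    have h1 : (a + 1).toNat = a.toNat + 1 := by omega
    have h2 : b.toNat = (b - 1).toNat + 1 := by omega
    rw [h1, h2, Nat.choose_succ_succ, Nat.succ_eq_add_one,
      show (b - 1).toNat + 1 = b.toNat from by omega]
    push_cast
    ring

lemma two_pow_add_choose_modEq (N m j : ℕ) (hm : m < 2 ^ N) (hj : j < 2 ^ N) :
    (2 ^ N + m).choose j ≡ m.choose j [MOD 2] := by
  haveI : Fact (Nat.Prime 2) := ⟨Nat.prime_two⟩
  have hlt : 2 ^ N + m < 2 ^ (N + 1) := by rw [pow_succ]; omega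
  have hj1 : j < 2 ^ (N + 1) := by rw [pow_succ]; omega
  have hm1 : m < 2 ^ (N + 1) := by rw [pow_succ]; omega
  have e1 := Choose.choose_modEq_prod_range_choose_nat (p := 2) (a := N + 1) hlt hj1
  have e2 := Choose.choose_modEq_prod_range_choose_nat (p := 2) (a := N + 1) hm1 hj1
  refine e1.trans (Nat.ModEq.trans ?_ e2.symm)
  have heq : ∏ i ∈ Finset.range (N + 1), Nat.choose ((2 ^ N + m) / 2 ^ i % 2) (j / 2 ^ i % 2)
      = ∏ i ∈ Finset.range (N + 1), Nat.choose (m / 2 ^ i % 2) (j / 2 ^ i % 2) := by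
    apply Finset.prod_congr rfl
    intro i hi
    rw [Finset.mem_range] at hi
    rcases lt_or_eq_of_le (Nat.lt_succ_iff.mp hi) with h | h
    · have hdiv : (2 ^ N + m) / 2 ^ i = 2 ^ (N - i) + m / 2 ^ i := by
        have hpow : 2 ^ N = 2 ^ i * 2 ^ (N - i) := by
          rw [← pow_add]; congr 1; omega
        rw [hpow, Nat.mul_add_div (by positivity)]
      rw [hdiv]
      have h2 : 2 ^ (N - i) % 2 = 0 := by
        have : 2 ^ (N - i) = 2 ^ (N - i - 1) * 2 := by rw [← pow_succ]; congr 1; omega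
        omega
      congr 1
      omega
    · subst h
      have hd1 : (2 ^ i + m) / 2 ^ i = 1 := by
        rw [Nat.add_comm, Nat.add_div_right _ (by positivity), Nat.div_eq_of_lt hm]
      have hd2 : m / 2 ^ i = 0 := Nat.div_eq_of_lt hm
      have hd3 : j / 2 ^ i = 0 := Nat.div_eq_of_lt hj
      rw [hd1, hd2, hd3]
      decide
  rw [heq]

/-- key divisibility over ℤ -/
lemma two_dvd_key (N m j : ℕ) (hm : m < 2 ^ N) (hj : j < 2 ^ N) :
    (2 : ℤ) ∣ (((2 ^ N + m).choose j : ℤ) - (m.choose j : ℤ)) := by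
  have h := (two_pow_add_choose_modEq N m j hm hj).dvd
  have h2 : (2 : ℤ) ∣ ((m.choose j : ℤ) - ((2 ^ N + m).choose j : ℤ)) := by exact_mod_cast h
  exact dvd_sub_comm.mp h2

lemma intCast_eq_of_dvd (F : Type*) [Field F] [CharP F 2] {a b : ℤ}
    (h : (2 : ℤ) ∣ a - b) : (a : F) = (b : F) := by
  have h0 : ((a - b : ℤ) : F) = 0 := (CharP.intCast_eq_zero_iff F 2 _).mpr h
  push_cast at h0
  exact sub_eq_zero.mp h0

lemma two_le_two_pow' {n : ℕ} (hn : 0 < n) : 2 ≤ 2 ^ n :=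
  calc 2 = 2 ^ 1 := rfl
  _ ≤ 2 ^ n := Nat.pow_le_pow_right (by norm_num) hn

noncomputable def hamZassEquiv (n : ℕ) (hn : 0 < n) :
    {ij : ℕ × ℕ // ij.1 < 2 ^ 1 ∧ ij.2 < 2 ^ n ∧ ij ≠ (0, 0)} ≃ Fin (2 ^ (n + 1) - 1) :=
  Equiv.ofBijective (fun u => ⟨if u.1.1 = 1 then u.1.2 else u.1.2 + 2 ^ n - 1, by
    obtain ⟨⟨i, j⟩, hi, hj, hij⟩ := u
    have h2 : 2 ≤ 2 ^ n := two_le_two_pow' hn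
    have hp : 2 ^ (n + 1) = 2 * 2 ^ n := by rw [pow_succ]; ring
    dsimp only
    split <;> omega⟩) (by
    constructor
    · rintro ⟨⟨i, j⟩, hi, hj, hij⟩ ⟨⟨k, l⟩, hk, hl, hkl⟩ h
      rw [Fin.mk.injEq] at h
      dsimp only at h hi hj hk hl
      have hj1 : i = 0 → 1 ≤ j := by
        intro h0; subst h0
        rcases Nat.eq_zero_or_pos j with h' | h'
        · exact absurd (by simp [h']) hij
        · exact h'
      have hl1 : k = 0 → 1 ≤ l := by
        intro h0; subst h0
        rcases Nat.eq_zero_or_pos l with h' | h'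
        · exact absurd (by simp [h']) hkl
        · exact h'
      apply Subtype.ext
      dsimp only
      interval_cases i <;> interval_cases k <;> simp_all <;> omega
    · intro t
      have h2 : 2 ≤ 2 ^ n := two_le_two_pow' hn
      have hp : 2 ^ (n + 1) = 2 * 2 ^ n := by rw [pow_succ]; ring
      have ht := t.isLt
      by_cases h : (t : ℕ) < 2 ^ n
      · exact ⟨⟨(1, (t : ℕ)), by norm_num, h, by simp⟩, by apply Fin.ext; simp⟩
      · refine ⟨⟨(0, (t : ℕ) - 2 ^ n + 1), by norm_num, by omega, by
          simp only [ne_eq, Prod.mk.injEq, not_and]; intro h0; omega⟩, ?_⟩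
        apply Fin.ext
        simp only
        norm_num
        omega)

lemma hamZassEquiv_apply_one (n : ℕ) (hn : 0 < n) (j : ℕ) (h1 : ((1 : ℕ), j).1 < 2 ^ 1)
    (h2 : ((1 : ℕ), j).2 < 2 ^ n) (h3 : (((1 : ℕ), j) : ℕ × ℕ) ≠ (0, 0)) :
    ((hamZassEquiv n hn ⟨(1, j), h1, h2, h3⟩ : Fin (2 ^ (n + 1) - 1)) : ℕ) = j := rfl

lemma hamZassEquiv_apply_zero (n : ℕ) (hn : 0 < n) (j : ℕ) (h1 : ((0 : ℕ), j).1 < 2 ^ 1)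
    (h2 : ((0 : ℕ), j).2 < 2 ^ n) (h3 : (((0 : ℕ), j) : ℕ × ℕ) ≠ (0, 0)) :
    ((hamZassEquiv n hn ⟨(0, j), h1, h2, h3⟩ : Fin (2 ^ (n + 1) - 1)) : ℕ) = j + 2 ^ n - 1 := rfl

/-- In characteristic 2, the linear map `H(2:(1,n);ω₂) → W'` sending
`x·y^{(j)} ↦ E_{j-1}` (for `0 ≤ j ≤ 2^n - 1`) and `y^{(j)} ↦ E_{j+2^n-2}` (for
`1 ≤ j ≤ 2^n - 1`) is an isomorphism of Lie algebras onto the simple Zassenhaus algebra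
`W'` of dimension `2^{n+1} - 1`. -/
theorem stmt_14 (n : ℕ) (hn : 0 < n)
    (F : Type*) [Field F] [CharP F 2]
    -- `L = H(2:(1,n);ω₂)` with `X i j` the monomial `x^{(i)}y^{(j)}`
    (L : Type*) [LieRing L] [LieAlgebra F L]
    (X : ℤ → ℤ → L)
    (hX0 : ∀ i j : ℤ, (i < 0 ∨ j < 0 ∨ (2 : ℤ) ^ 1 ≤ i ∨ (2 : ℤ) ^ n ≤ j) → X i j = 0)
    (hXe : X 0 0 = X ((2 : ℤ) ^ 1 - 1) ((2 : ℤ) ^ n - 1))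
    (B : Module.Basis {ij : ℕ × ℕ // ij.1 < 2 ^ 1 ∧ ij.2 < 2 ^ n ∧ ij ≠ (0, 0)} F L)
    (hB : ∀ v, B v = X v.1.1 v.1.2)
    (hbr : ∀ i j k l : ℤ, 0 ≤ i → i < (2 : ℤ) ^ 1 → 0 ≤ j → j < (2 : ℤ) ^ n →
      ¬(i = 0 ∧ j = 0) → 0 ≤ k → k < (2 : ℤ) ^ 1 → 0 ≤ l → l < (2 : ℤ) ^ n →
      ¬(k = 0 ∧ l = 0) →
      ⁅X i j, X k l⁆ = (hamN i j k l : F) • X (i + k - 1) (j + l - 1))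
    -- `W'`: the simple Zassenhaus algebra of dimension `2^{n+1} - 1`, with basis
    -- `E i`, `i = -1, 0, …, 2^{n+1} - 3`, and `E k = 0` outside this range
    (W' : Type*) [LieRing W'] [LieAlgebra F W']
    (E : ℤ → W')
    (hE0 : ∀ i : ℤ, i < -1 ∨ (2 : ℤ) ^ (n + 1) - 3 < i → E i = 0)
    (BE : Module.Basis (Fin (2 ^ (n + 1) - 1)) F W')
    (hBE : ∀ t : Fin (2 ^ (n + 1) - 1), BE t = E ((t : ℤ) - 1))
    (hbrE : ∀ i j : ℤ, -1 ≤ i → i ≤ (2 : ℤ) ^ (n + 1) - 3 → -1 ≤ j → j ≤ (2 : ℤ) ^ (n + 1) - 3 →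
      ⁅E i, E j⁆ = ((ichoose (i + j + 1) j - ichoose (i + j + 1) i : ℤ) : F) • E (i + j)) :
    ∃ φ : L ≃ₗ⁅F⁆ W',
      (∀ j : ℕ, j ≤ 2 ^ n - 1 → φ (X 1 j) = E ((j : ℤ) - 1)) ∧
      (∀ j : ℕ, 1 ≤ j → j ≤ 2 ^ n - 1 → φ (X 0 j) = E ((j : ℤ) + 2 ^ n - 2)) := by
  have h2n : 2 ≤ 2 ^ n := two_le_two_pow' hn
  have hp : 2 ^ (n + 1) = 2 * 2 ^ n := by rw [pow_succ]; ring
  have hNZ : (2 : ℤ) ^ n = ((2 ^ n : ℕ) : ℤ) := by push_cast; ring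
  have hpZ : (2 : ℤ) ^ (n + 1) = ((2 ^ (n + 1) : ℕ) : ℤ) := by push_cast; ring
  set φ₀ : L ≃ₗ[F] W' := B.equiv BE (hamZassEquiv n hn) with hφ₀
  -- values of φ₀ on basis monomials
  have hφ1 : ∀ j : ℕ, j < 2 ^ n → φ₀ (X 1 (j : ℤ)) = E ((j : ℤ) - 1) := by
    intro j hj
    have h3 : ((1, j) : ℕ × ℕ) ≠ (0, 0) := by simp
    have hu : B ⟨(1, j), by norm_num, hj, h3⟩ = X 1 (j : ℤ) := by
      have := hB ⟨(1, j), by norm_num, hj, h3⟩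
      simpa using this
    rw [← hu, hφ₀, Module.Basis.equiv_apply, hBE]
    congr 1
  have hφ0 : ∀ j : ℕ, 1 ≤ j → j < 2 ^ n →
      φ₀ (X 0 (j : ℤ)) = E ((j : ℤ) + ((2 ^ n : ℕ) : ℤ) - 2) := by
    intro j hj1 hj
    have h3 : ((0, j) : ℕ × ℕ) ≠ (0, 0) := by simp; omega
    have hu : B ⟨(0, j), by norm_num, hj, h3⟩ = X 0 (j : ℤ) := by
      have := hB ⟨(0, j), by norm_num, hj, h3⟩
      simpa using this
    rw [← hu, hφ₀, Module.Basis.equiv_apply, hBE]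
    congr 1
    rw [hamZassEquiv_apply_zero n hn j (by norm_num) hj h3]
    omega
  have hφe : φ₀ (X 0 0) = E (((2 ^ n : ℕ) : ℤ) - 2) := by
    rw [hXe, show (2 : ℤ) ^ 1 - 1 = 1 from by norm_num,
      show (2 : ℤ) ^ n - 1 = ((2 ^ n - 1 : ℕ) : ℤ) from by rw [hNZ]; omega,
      hφ1 (2 ^ n - 1) (by omega)]
    congr 1
    omega
  -- char 2 coefficient helper
  have hsmul : ∀ (a b : ℤ) (w : W'), (2 : ℤ) ∣ a - b → (a : F) • w = (b : F) • w := by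
    intro a b w h
    rw [intCast_eq_of_dvd F h]
  -- Case (0,j),(0,l)
  have case00 : ∀ j l : ℕ, 1 ≤ j → j < 2 ^ n → 1 ≤ l → l < 2 ^ n →
      φ₀ ⁅X 0 (j : ℤ), X 0 (l : ℤ)⁆ = ⁅φ₀ (X 0 (j : ℤ)), φ₀ (X 0 (l : ℤ))⁆ := by
    intro j l hj1 hj hl1 hl
    rw [hbr 0 j 0 l le_rfl (by norm_num) (by omega) (by rw [hNZ]; omega) (by omega)
        le_rfl (by norm_num) (by omega) (by rw [hNZ]; omega) (by omega)]
    rw [map_smul]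
    have hham : hamN 0 (j : ℤ) 0 (l : ℤ) = 0 := by
      norm_num [hamN, ichoose]
    rw [hham, Int.cast_zero, zero_smul, hφ0 j hj1 hj, hφ0 l hl1 hl,
      hbrE ((j : ℤ) + ((2 ^ n : ℕ) : ℤ) - 2) ((l : ℤ) + ((2 ^ n : ℕ) : ℤ) - 2)
        (by omega) (by rw [hpZ]; omega) (by omega) (by rw [hpZ]; omega),
      hE0 ((j : ℤ) + ((2 ^ n : ℕ) : ℤ) - 2 + ((l : ℤ) + ((2 ^ n : ℕ) : ℤ) - 2))
        (Or.inr (by rw [hpZ]; omega)), smul_zero]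
  -- Case (1,j),(0,l)
  have case10 : ∀ j l : ℕ, j < 2 ^ n → 1 ≤ l → l < 2 ^ n →
      φ₀ ⁅X 1 (j : ℤ), X 0 (l : ℤ)⁆ = ⁅φ₀ (X 1 (j : ℤ)), φ₀ (X 0 (l : ℤ))⁆ := by
    intro j l hj hl1 hl
    rw [hbr 1 j 0 l (by norm_num) (by norm_num) (by omega) (by rw [hNZ]; omega)
        (by omega) le_rfl (by norm_num) (by omega) (by rw [hNZ]; omega) (by omega)]
    rw [map_smul]
    have hham : hamN 1 (j : ℤ) 0 (l : ℤ) = -ichoose ((j : ℤ) + (l : ℤ) - 1) (j : ℤ) := by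
      unfold hamN
      rw [show (1 : ℤ) + 0 - 1 = 0 from by ring, show (1 : ℤ) - 1 = 0 from by ring,
        ichoose_eq_zero_of_lt le_rfl one_pos, ichoose_zero_right le_rfl]
      ring
    rw [hham, hφ1 j hj, hφ0 l hl1 hl,
      hbrE ((j : ℤ) - 1) ((l : ℤ) + ((2 ^ n : ℕ) : ℤ) - 2)
        (by omega) (by rw [hpZ]; omega) (by omega) (by rw [hpZ]; omega),
      show (1 : ℤ) + 0 - 1 = 0 from by ring,
      show (j : ℤ) + (l : ℤ) - 1 = ((j + l - 1 : ℕ) : ℤ) from by omega]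
    by_cases hm0 : j + l - 1 = 0
    · have hj' : j = 0 := by omega
      have hl' : l = 1 := by omega
      subst hj'; subst hl'
      simp only [Nat.cast_zero, Nat.cast_one]
      rw [show ((0 + 1 - 1 : ℕ) : ℤ) = 0 from by norm_num, hφe,
        show (0 : ℤ) - 1 + (1 + ((2 ^ n : ℕ) : ℤ) - 2) = ((2 ^ n : ℕ) : ℤ) - 2 from by ring]
      apply hsmul
      have v1 : ichoose (((2 ^ n : ℕ) : ℤ) - 2 + 1) (1 + ((2 ^ n : ℕ) : ℤ) - 2) = 1 := by
        rw [show 1 + ((2 ^ n : ℕ) : ℤ) - 2 = ((2 ^ n : ℕ) : ℤ) - 2 + 1 from by ring]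
        exact ichoose_self (by omega)
      have v2 : ichoose (((2 ^ n : ℕ) : ℤ) - 2 + 1) ((0 : ℤ) - 1) = 0 :=
        ichoose_of_neg_right _ (by norm_num)
      rw [v1, v2, ichoose_zero_right le_rfl]
      decide
    · by_cases hms : j + l - 1 < 2 ^ n
      · rw [hφ0 (j + l - 1) (by omega) hms,
          show (j : ℤ) - 1 + ((l : ℤ) + ((2 ^ n : ℕ) : ℤ) - 2)
            = ((j + l - 1 : ℕ) : ℤ) + ((2 ^ n : ℕ) : ℤ) - 2 from by omega]
        apply hsmul
        have e1 : ichoose (((j + l - 1 : ℕ) : ℤ) + ((2 ^ n : ℕ) : ℤ) - 2 + 1)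
            ((l : ℤ) + ((2 ^ n : ℕ) : ℤ) - 2)
            = ichoose (((j + l - 1 : ℕ) : ℤ) + ((2 ^ n : ℕ) : ℤ) - 2 + 1) (j : ℤ) := by
          rw [ichoose_symm ((l : ℤ) + ((2 ^ n : ℕ) : ℤ) - 2) (by omega)]
          congr 1
          omega
        rw [e1]
        have e2 := ichoose_pascal
          (a := ((j + l - 1 : ℕ) : ℤ) + ((2 ^ n : ℕ) : ℤ) - 2 + 1) (b := (j : ℤ))
          (by omega) (by omega)
        have e3 : ichoose (((j + l - 1 : ℕ) : ℤ) + ((2 ^ n : ℕ) : ℤ) - 2 + 1 + 1) (j : ℤ)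
            = ((2 ^ n + (j + l - 1) : ℕ).choose j : ℤ) := by
          rw [show ((j + l - 1 : ℕ) : ℤ) + ((2 ^ n : ℕ) : ℤ) - 2 + 1 + 1
            = ((2 ^ n + (j + l - 1) : ℕ) : ℤ) from by omega, ichoose_natCast]
        have e4 : ichoose ((j + l - 1 : ℕ) : ℤ) (j : ℤ) = ((j + l - 1 : ℕ).choose j : ℤ) :=
          ichoose_natCast _ _
        obtain ⟨d, hd⟩ := two_dvd_key n (j + l - 1) j hms hj
        refine ⟨-((j + l - 1 : ℕ).choose j : ℤ) - d
          + ichoose (((j + l - 1 : ℕ) : ℤ) + ((2 ^ n : ℕ) : ℤ) - 2 + 1) ((j : ℤ) - 1), ?_⟩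
        linarith [e2, e3, e4, hd]
      · rw [hX0 0 ((j + l - 1 : ℕ) : ℤ) (Or.inr (Or.inr (Or.inr (by rw [hNZ]; omega)))),
          map_zero, smul_zero,
          hE0 ((j : ℤ) - 1 + ((l : ℤ) + ((2 ^ n : ℕ) : ℤ) - 2)) (Or.inr (by rw [hpZ]; omega)),
          smul_zero]
  -- Case (1,j),(1,l)
  have case11 : ∀ j l : ℕ, j < 2 ^ n → l < 2 ^ n → j + l ≠ 0 →
      φ₀ ⁅X 1 (j : ℤ), X 1 (l : ℤ)⁆ = ⁅φ₀ (X 1 (j : ℤ)), φ₀ (X 1 (l : ℤ))⁆ := by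
    intro j l hj hl hjl
    rw [hbr 1 j 1 l (by norm_num) (by norm_num) (by omega) (by rw [hNZ]; omega)
        (by omega) (by norm_num) (by norm_num) (by omega) (by rw [hNZ]; omega) (by omega)]
    rw [map_smul]
    have hham : hamN 1 (j : ℤ) 1 (l : ℤ)
        = ichoose ((j : ℤ) + (l : ℤ) - 1) ((j : ℤ) - 1) - ichoose ((j : ℤ) + (l : ℤ) - 1) (j : ℤ) := by
      unfold hamN
      rw [show (1 : ℤ) + 1 - 1 = 1 from by ring, show (1 : ℤ) - 1 = 0 from by ring,
        ichoose_self (by norm_num), ichoose_zero_right (by norm_num)]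
      ring
    rw [hham, hφ1 j hj, hφ1 l hl,
      hbrE ((j : ℤ) - 1) ((l : ℤ) - 1)
        (by omega) (by rw [hpZ]; omega) (by omega) (by rw [hpZ]; omega),
      show (1 : ℤ) + 1 - 1 = 1 from by ring,
      show (j : ℤ) + (l : ℤ) - 1 = ((j + l - 1 : ℕ) : ℤ) from by omega,
      show (j : ℤ) - 1 + ((l : ℤ) - 1) = ((j + l - 1 : ℕ) : ℤ) - 1 from by omega,
      show ((j + l - 1 : ℕ) : ℤ) - 1 + 1 = ((j + l - 1 : ℕ) : ℤ) from by ring]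
    have e1 : ichoose ((j + l - 1 : ℕ) : ℤ) ((l : ℤ) - 1)
        = ichoose ((j + l - 1 : ℕ) : ℤ) (j : ℤ) := by
      rw [ichoose_symm ((l : ℤ) - 1) (by omega)]
      congr 1
      omega
    rw [e1]
    by_cases hms : j + l - 1 < 2 ^ n
    · rw [hφ1 (j + l - 1) hms]
      apply hsmul
      exact ⟨ichoose ((j + l - 1 : ℕ) : ℤ) ((j : ℤ) - 1)
        - ichoose ((j + l - 1 : ℕ) : ℤ) (j : ℤ), by ring⟩
    · rw [hX0 1 ((j + l - 1 : ℕ) : ℤ) (Or.inr (Or.inr (Or.inr (by rw [hNZ]; omega)))),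
        map_zero, smul_zero]
      have e2 := ichoose_pascal (a := ((j + l - 1 : ℕ) : ℤ)) (b := (j : ℤ))
        (by omega) (by omega)
      have e3 : ichoose (((j + l - 1 : ℕ) : ℤ) + 1) (j : ℤ)
          = ((2 ^ n + (j + l - 2 ^ n) : ℕ).choose j : ℤ) := by
        rw [show ((j + l - 1 : ℕ) : ℤ) + 1 = ((2 ^ n + (j + l - 2 ^ n) : ℕ) : ℤ) from by omega,
          ichoose_natCast]
      have e6 : (j + l - 2 ^ n : ℕ).choose j = 0 := Nat.choose_eq_zero_of_lt (by omega)
      obtain ⟨d, hd⟩ := two_dvd_key n (j + l - 2 ^ n) j (by omega) hj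
      rw [e6] at hd
      have hz : ((ichoose ((j + l - 1 : ℕ) : ℤ) (j : ℤ)
          - ichoose ((j + l - 1 : ℕ) : ℤ) ((j : ℤ) - 1) : ℤ) : F) = ((0 : ℤ) : F) := by
        apply intCast_eq_of_dvd
        refine ⟨d - ichoose ((j + l - 1 : ℕ) : ℤ) ((j : ℤ) - 1), ?_⟩
        push_cast at hd
        linarith [e2, e3, hd]
      rw [hz, Int.cast_zero, zero_smul]
  -- assemble on basis
  have hcore : ∀ u v, φ₀ ⁅B u, B v⁆ = ⁅φ₀ (B u), φ₀ (B v)⁆ := by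
    have swap : ∀ x y : L, φ₀ ⁅x, y⁆ = ⁅φ₀ x, φ₀ y⁆ → φ₀ ⁅y, x⁆ = ⁅φ₀ y, φ₀ x⁆ := by
      intro x y h
      rw [show ⁅y, x⁆ = -⁅x, y⁆ from (lie_skew y x).symm, map_neg, h]
      exact lie_skew (φ₀ y) (φ₀ x)
    intro u v
    obtain ⟨⟨i, j⟩, hi, hj, hij⟩ := u
    obtain ⟨⟨k, l⟩, hk, hl, hkl⟩ := v
    simp only at hi hj hk hl
    have hj0 : i = 0 → 1 ≤ j := by
      intro h0
      rcases Nat.eq_zero_or_pos j with h' | h'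
      · exact absurd (by simp [h0, h']) hij
      · exact h'
    have hl0 : k = 0 → 1 ≤ l := by
      intro h0
      rcases Nat.eq_zero_or_pos l with h' | h'
      · exact absurd (by simp [h0, h']) hkl
      · exact h'
    rw [hB, hB]
    dsimp only
    interval_cases i <;> interval_cases k
    · simp only [Nat.cast_zero]
      exact case00 j l (hj0 rfl) hj (hl0 rfl) hl
    · simp only [Nat.cast_zero, Nat.cast_one]
      exact swap _ _ (case10 l j hl (hj0 rfl) hj)
    · simp only [Nat.cast_zero, Nat.cast_one]
      exact case10 j l hj (hl0 rfl) hl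
    · rcases eq_or_ne j l with rfl | hne
      · simp [lie_self]
      · simp only [Nat.cast_one]
        exact case11 j l hj hl (by omega)
  -- bilinear extension
  have hmap : ∀ x y : L, φ₀ ⁅x, y⁆ = ⁅φ₀ x, φ₀ y⁆ := by
    let P1 : L →ₗ[F] L →ₗ[F] W' :=
      LinearMap.mk₂ F (fun x y => φ₀ ⁅x, y⁆)
        (fun x x' y => by simp [add_lie])
        (fun c x y => by simp [smul_lie])
        (fun x y y' => by simp [lie_add])
        (fun c x y => by simp [lie_smul])
    let P2 : L →ₗ[F] L →ₗ[F] W' :=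
      LinearMap.mk₂ F (fun x y => ⁅φ₀ x, φ₀ y⁆)
        (fun x x' y => by simp [add_lie])
        (fun c x y => by simp [smul_lie])
        (fun x y y' => by simp [lie_add])
        (fun c x y => by simp [lie_smul])
    have hP : P1 = P2 := B.ext fun u => B.ext fun v => hcore u v
    intro x y
    exact LinearMap.congr_fun (LinearMap.congr_fun hP x) y
  refine ⟨⟨⟨(φ₀ : L →ₗ[F] W'), fun {x y} => hmap x y⟩, φ₀.symm, φ₀.left_inv, φ₀.right_inv⟩,
    ?_, ?_⟩
  · intro j hj
    exact hφ1 j (by omega)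
  · intro j hj1 hj
    rw [show ((j : ℤ) + 2 ^ n - 2 : ℤ) = (j : ℤ) + ((2 ^ n : ℕ) : ℤ) - 2 from by rw [hNZ]]
    exact hφ0 j hj1 (by omega)
end

section
/- Let p be a prime, n a positive integer, r = p^n−2, and let F be a field containing F_{p^n}. Let W(1:n) be the Lie algebra over F with basis E_i for i = −1, 0, …, r, and bracket [E_i, E_j] = (C(i+j+1,j) − C(i+j+1,i))·E_{i+j} (coefficients taken modulo p), with the convention E_k = 0 for k < −1 or k > r. For α ∈ F_{p^n} set e_α = E_r + Σ_{i=−1}^{r} α^{i+1}·E_i, with the convention 0^0 = 1 (so e_0 = E_{−1} + E_r). Then [e_α, e_β] = (β − α)·e_{α+β} for all α, β ∈ F_{p^n}. -/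
lemma ichoose_nn (n k : ℕ) : ichoose (n : ℤ) (k : ℤ) = (n.choose k : ℤ) := by
  simp [ichoose]

lemma ichoose_neg_right (n k : ℤ) (hk : k < 0) : ichoose n k = 0 := by
  simp [ichoose, hk.not_ge]

lemma my_lie_sum {L : Type*} [LieRing L] {ι : Type*} (x : L) (s : Finset ι) (f : ι → L) :
    ⁅x, ∑ i ∈ s, f i⁆ = ∑ i ∈ s, ⁅x, f i⁆ :=
  map_sum (AddMonoidHom.mk' (fun y => ⁅x, y⁆) (lie_add x)) f s

lemma my_sum_lie {L : Type*} [LieRing L] {ι : Type*} (x : L) (s : Finset ι) (f : ι → L) :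
    ⁅∑ i ∈ s, f i, x⁆ = ∑ i ∈ s, ⁅f i, x⁆ :=
  map_sum (AddMonoidHom.mk' (fun y => ⁅y, x⁆) (fun a b => add_lie a b x)) f s

lemma core {R : Type*} [CommRing R] (a b : R) (m : ℕ) :
    ∑ k ∈ Finset.range (m+2), a^k * b^(m+1-k) *
      ((ichoose (m : ℤ) ((m : ℤ) - (k : ℤ)) - ichoose (m : ℤ) ((k : ℤ) - 1) : ℤ) : R)
    = (b - a) * (a + b)^m := by
  have h1 : ∑ k ∈ Finset.range (m+2), a^k * b^(m+1-k) *
      ((ichoose (m : ℤ) ((m : ℤ) - (k : ℤ)) : ℤ) : R) = b * (a + b)^m := by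
    rw [Finset.sum_range_succ]
    rw [ichoose_neg_right (m : ℤ) ((m : ℤ) - ((m+1 : ℕ) : ℤ)) (by push_cast; omega)]
    rw [add_pow, Finset.mul_sum]
    simp only [Int.cast_zero, mul_zero, add_zero]
    refine Finset.sum_congr rfl fun k hk => ?_
    have hk' : k ≤ m := Nat.lt_succ_iff.mp (Finset.mem_range.mp hk)
    rw [show (m : ℤ) - (k : ℤ) = ((m - k : ℕ) : ℤ) by omega, ichoose_nn, Nat.choose_symm hk',
      show m + 1 - k = (m - k) + 1 by omega, pow_succ]
    push_cast
    ring
  have h2 : ∑ k ∈ Finset.range (m+2), a^k * b^(m+1-k) *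
      ((ichoose (m : ℤ) ((k : ℤ) - 1) : ℤ) : R) = a * (a + b)^m := by
    rw [Finset.sum_range_succ']
    have h0 : ichoose (m : ℤ) (((0:ℕ) : ℤ) - 1) = 0 := ichoose_neg_right _ _ (by omega)
    rw [h0, add_pow, Finset.mul_sum]
    simp only [Int.cast_zero, mul_zero, add_zero]
    refine Finset.sum_congr rfl fun k hk => ?_
    have hk' : k ≤ m := Nat.lt_succ_iff.mp (Finset.mem_range.mp hk)
    rw [show ((k+1 : ℕ) : ℤ) - 1 = (k : ℤ) by push_cast; ring, ichoose_nn,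
      show m + 1 - (k+1) = m - k by omega, pow_succ]
    push_cast
    ring
  have h3 : ∀ k ∈ Finset.range (m+2), a^k * b^(m+1-k) *
      ((ichoose (m : ℤ) ((m : ℤ) - (k : ℤ)) - ichoose (m : ℤ) ((k : ℤ) - 1) : ℤ) : R)
      = a^k * b^(m+1-k) * ((ichoose (m : ℤ) ((m : ℤ) - (k : ℤ)) : ℤ) : R)
        - a^k * b^(m+1-k) * ((ichoose (m : ℤ) ((k : ℤ) - 1) : ℤ) : R) := by
    intro k _
    push_cast
    ring
  rw [Finset.sum_congr rfl h3, Finset.sum_sub_distrib, h1, h2]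
  ring

lemma core2 {R : Type*} [CommRing R] (a b : R) (m : ℕ) :
    ∑ k ∈ Finset.range m, a^(k+1) * b^(m+1-(k+1)) *
      ((ichoose (m : ℤ) ((m : ℤ) - ((k+1 : ℕ) : ℤ)) - ichoose (m : ℤ) (((k+1 : ℕ) : ℤ) - 1) : ℤ) : R)
    = (b - a) * (a + b)^m - b^(m+1) + a^(m+1) := by
  have h := core a b m
  rw [Finset.sum_range_succ, Finset.sum_range_succ'] at h
  have hT0 : (a : R) ^ 0 * b ^ (m + 1 - 0) *
      ((ichoose (m : ℤ) ((m : ℤ) - ((0:ℕ) : ℤ)) - ichoose (m : ℤ) (((0:ℕ) : ℤ) - 1) : ℤ) : R)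
      = b ^ (m+1) := by
    rw [show (m : ℤ) - ((0:ℕ) : ℤ) = ((m : ℕ) : ℤ) by omega, ichoose_nn, Nat.choose_self,
      ichoose_neg_right _ _ (by omega)]
    norm_num
  have hTm : (a : R) ^ (m+1) * b ^ (m + 1 - (m+1)) *
      ((ichoose (m : ℤ) ((m : ℤ) - ((m+1 : ℕ) : ℤ)) - ichoose (m : ℤ) (((m+1 : ℕ) : ℤ) - 1) : ℤ) : R)
      = -(a ^ (m+1)) := by
    rw [ichoose_neg_right _ _ (by push_cast; omega),
      show (((m+1 : ℕ) : ℤ) - 1) = ((m : ℕ) : ℤ) by push_cast; omega, ichoose_nn, Nat.choose_self]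
    norm_num
  rw [hT0, hTm] at h
  linear_combination h


/-- In the Zassenhaus algebra `W(1:n)` over a field `F` containing
`F_{p^n}`, setting `e_α = E_r + Σ_{i=-1}^r α^{i+1} E_i` (with `0^0 = 1`, `r = p^n - 2`)
one has `[e_α, e_β] = (β - α) e_{α+β}` for all `α, β ∈ F_{p^n}`. -/
theorem stmt_15 (p n : ℕ) (hp : p.Prime) (hn : 0 < n)
    (Fq : Type*) [Field Fq] [Fintype Fq] (hq : Fintype.card Fq = p ^ n)
    (F : Type*) [Field F] [Algebra Fq F]
    (L : Type*) [LieRing L] [LieAlgebra F L]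
    -- `E i`, `i = -1, 0, …, p^n - 2`, is the standard basis of `W(1:n)`,
    -- with `E k = 0` outside this range
    (E : ℤ → L)
    (hE0 : ∀ i : ℤ, i < -1 ∨ (p : ℤ) ^ n - 2 < i → E i = 0)
    (B : Module.Basis (Fin (p ^ n)) F L)
    (hB : ∀ t : Fin (p ^ n), B t = E ((t : ℤ) - 1))
    (hbr : ∀ i j : ℤ, -1 ≤ i → i ≤ (p : ℤ) ^ n - 2 → -1 ≤ j → j ≤ (p : ℤ) ^ n - 2 →
      ⁅E i, E j⁆ = ((ichoose (i + j + 1) j - ichoose (i + j + 1) i : ℤ) : F) • E (i + j))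
    -- the group basis `e_α = E_r + Σ_{i=-1}^{r} α^{i+1} • E_i`
    (e : Fq → L)
    (he : ∀ α : Fq, e α = E ((p : ℤ) ^ n - 2) +
      ∑ t ∈ Finset.range (p ^ n), (algebraMap Fq F α) ^ t • E ((t : ℤ) - 1)) :
    ∀ α β : Fq, ⁅e α, e β⁆ = algebraMap Fq F (β - α) • e (α + β) := by
  intro α β
  have hq2 : 2 ≤ p ^ n := Nat.one_lt_pow (by omega) hp.one_lt
  set R : ℤ := (p : ℤ) ^ n - 2 with hRdef
  have hRq : R = ((p ^ n : ℕ) : ℤ) - 2 := by rw [hRdef]; push_cast; ring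
  have hcastF : ((p ^ n : ℕ) : F) = 0 := by
    have h1 : ((p ^ n : ℕ) : Fq) = 0 := by
      rw [← hq]; exact FiniteField.cast_card_eq_zero Fq
    rw [← map_natCast (algebraMap Fq F) (p ^ n), h1, map_zero]
  have hfrob : ∀ γ : Fq, (algebraMap Fq F γ) ^ (p ^ n) = algebraMap Fq F γ := by
    intro γ; rw [← map_pow, ← hq, FiniteField.pow_card]
  set a := algebraMap Fq F α with ha
  set b := algebraMap Fq F β with hb
  -- the bracket of the "polynomial part" with E R
  have key1 : ∀ c : F, ⁅∑ t ∈ Finset.range (p ^ n), c ^ t • E ((t : ℤ) - 1), E R⁆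
      = E (R - 1) - (2 * c) • E R := by
    intro c
    obtain ⟨q', hq'⟩ : ∃ q', p ^ n = q' + 2 := ⟨p ^ n - 2, by omega⟩
    rw [my_sum_lie, hq', Finset.sum_range_succ', Finset.sum_range_succ']
    have hmain : ∀ t ∈ Finset.range q',
        ⁅c ^ (t + 1 + 1) • E (((t + 1 + 1 : ℕ) : ℤ) - 1), E R⁆ = 0 := by
      intro t ht
      have ht' : t < q' := Finset.mem_range.mp ht
      rw [smul_lie, hbr _ _ (by omega) (by omega) (by omega) (by omega),
        hE0 _ (Or.inr (by omega)), smul_zero, smul_zero]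
    rw [Finset.sum_eq_zero hmain, smul_lie, smul_lie,
      hbr _ _ (by omega) (by omega) (by omega) (by omega),
      hbr _ _ (by omega) (by omega) (by omega) (by omega)]
    have e1 : ichoose (((0:ℕ) : ℤ) - 1 + R + 1) R = 1 := by
      rw [show ((0:ℕ) : ℤ) - 1 + R + 1 = ((p ^ n - 2 : ℕ) : ℤ) by omega,
        show R = ((p ^ n - 2 : ℕ) : ℤ) by omega, ichoose_nn, Nat.choose_self]
      norm_num
    have e2 : ichoose (((0:ℕ) : ℤ) - 1 + R + 1) (((0:ℕ) : ℤ) - 1) = 0 :=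
      ichoose_neg_right _ _ (by omega)
    have e3 : ichoose (((1:ℕ) : ℤ) - 1 + R + 1) R = ((p ^ n : ℕ) : ℤ) - 1 := by
      rw [show ((1:ℕ) : ℤ) - 1 + R + 1 = ((p ^ n - 1 : ℕ) : ℤ) by omega,
        show R = ((p ^ n - 2 : ℕ) : ℤ) by omega, ichoose_nn,
        show p ^ n - 1 = (p ^ n - 2) + 1 by omega, Nat.choose_succ_self_right]
      push_cast [show 2 ≤ p ^ n from hq2]
      omega
    have e4 : ichoose (((1:ℕ) : ℤ) - 1 + R + 1) (((1:ℕ) : ℤ) - 1) = 1 := by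
      rw [show ((1:ℕ) : ℤ) - 1 = ((0:ℕ) : ℤ) by omega,
        show ((0:ℕ) : ℤ) + R + 1 = ((p ^ n - 1 : ℕ) : ℤ) by omega, ichoose_nn,
        Nat.choose_zero_right]
      norm_num
    rw [e1, e2, e3, e4]
    have c1 : ((((p ^ n : ℕ) : ℤ) - 1 - 1 : ℤ) : F) = -2 := by
      have h5 : ((p ^ n : ℕ) : F) = 0 := hcastF
      push_cast
      rw [show ((p : F)) ^ n = ((p ^ n : ℕ) : F) by push_cast; ring, h5]
      ring
    have c2 : (((1 - 0 : ℤ)) : F) = 1 := by norm_num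
    rw [c1, c2]
    rw [show ((0:ℕ) : ℤ) - 1 + R = R - 1 by omega, show ((1:ℕ) : ℤ) - 1 + R = R by omega]
    simp only [pow_zero, pow_one, one_smul]
    rw [smul_smul]
    module
  -- the main double sum
  have key3 : ⁅∑ t ∈ Finset.range (p ^ n), a ^ t • E ((t : ℤ) - 1),
               ∑ s ∈ Finset.range (p ^ n), b ^ s • E ((s : ℤ) - 1)⁆
      = (∑ m ∈ Finset.range (p ^ n), ((b - a) * (a + b) ^ m) • E ((m : ℤ) - 1))
        - (b - a) • E R := by
    set f : ℕ × ℕ → L := fun x =>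
      (a ^ x.1 * b ^ x.2 *
        ((ichoose (((x.1 : ℤ) - 1) + ((x.2 : ℤ) - 1) + 1) ((x.2 : ℤ) - 1)
          - ichoose (((x.1 : ℤ) - 1) + ((x.2 : ℤ) - 1) + 1) ((x.1 : ℤ) - 1) : ℤ) : F))
        • E (((x.1 : ℤ) - 1) + ((x.2 : ℤ) - 1)) with hf
    have expand : ⁅∑ t ∈ Finset.range (p ^ n), a ^ t • E ((t : ℤ) - 1),
               ∑ s ∈ Finset.range (p ^ n), b ^ s • E ((s : ℤ) - 1)⁆
        = ∑ x ∈ Finset.range (p ^ n) ×ˢ Finset.range (p ^ n), f x := by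
      rw [Finset.sum_product, my_sum_lie]
      refine Finset.sum_congr rfl fun t ht => ?_
      rw [smul_lie, my_lie_sum, Finset.smul_sum]
      refine Finset.sum_congr rfl fun s hs => ?_
      have ht' : t < p ^ n := Finset.mem_range.mp ht
      have hs' : s < p ^ n := Finset.mem_range.mp hs
      rw [lie_smul, hbr _ _ (by omega) (by omega) (by omega) (by omega), hf]
      dsimp only
      rw [smul_smul, smul_smul]
    rw [expand, ← Finset.sum_fiberwise_of_maps_to (g := fun x : ℕ × ℕ => x.1 + x.2)
        (t := Finset.range (2 * p ^ n - 1))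
        (fun x hx => by
          simp only [Finset.mem_product, Finset.mem_range] at hx ⊢
          omega) f]
    have hsub : Finset.range (p ^ n + 1) ⊆ Finset.range (2 * p ^ n - 1) :=
      Finset.range_subset_range.mpr (by omega)
    have hvan : ∀ v ∈ Finset.range (2 * p ^ n - 1), v ∉ Finset.range (p ^ n + 1) →
        ∑ x ∈ (Finset.range (p ^ n) ×ˢ Finset.range (p ^ n)).filter
          (fun x => x.1 + x.2 = v), f x = 0 := by
      intro v hv hv'
      apply Finset.sum_eq_zero
      intro x hx
      simp only [Finset.mem_filter, Finset.mem_product, Finset.mem_range] at hx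
      simp only [Finset.mem_range] at hv hv'
      rw [hf]
      dsimp only
      rw [hE0 _ (Or.inr (by omega)), smul_zero]
    rw [← Finset.sum_subset hsub hvan, Finset.sum_range_succ']
    have h0 : ∑ x ∈ (Finset.range (p ^ n) ×ˢ Finset.range (p ^ n)).filter
        (fun x => x.1 + x.2 = 0), f x = 0 := by
      apply Finset.sum_eq_zero
      intro x hx
      simp only [Finset.mem_filter, Finset.mem_product, Finset.mem_range] at hx
      have h1 : x.1 = 0 := by omega
      have h2 : x.2 = 0 := by omega
      rw [hf]
      dsimp only
      rw [h1, h2, sub_self]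
      norm_num
    rw [h0, add_zero]
    have hfib : ∀ m ∈ Finset.range (p ^ n),
        ∑ x ∈ (Finset.range (p ^ n) ×ˢ Finset.range (p ^ n)).filter
          (fun x => x.1 + x.2 = m + 1), f x
        = ((b - a) * (a + b) ^ m) • E ((m : ℤ) - 1)
          - (if m = p ^ n - 1 then (b - a) • E ((m : ℤ) - 1) else 0) := by
      intro m hm
      have hm' : m < p ^ n := Finset.mem_range.mp hm
      have hstep : ∀ x ∈ (Finset.range (p ^ n) ×ˢ Finset.range (p ^ n)).filter
          (fun x => x.1 + x.2 = m + 1), f x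
          = (a ^ x.1 * b ^ x.2 *
            ((ichoose (m : ℤ) ((x.2 : ℤ) - 1) - ichoose (m : ℤ) ((x.1 : ℤ) - 1) : ℤ) : F))
              • E ((m : ℤ) - 1) := by
        intro x hx
        simp only [Finset.mem_filter, Finset.mem_product, Finset.mem_range] at hx
        rw [hf]
        dsimp only
        rw [show ((x.1 : ℤ) - 1) + ((x.2 : ℤ) - 1) + 1 = (m : ℤ) by omega,
          show ((x.1 : ℤ) - 1) + ((x.2 : ℤ) - 1) = (m : ℤ) - 1 by omega]
      rw [Finset.sum_congr rfl hstep, ← Finset.sum_smul]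
      have hscal : ∑ x ∈ (Finset.range (p ^ n) ×ˢ Finset.range (p ^ n)).filter
          (fun x => x.1 + x.2 = m + 1),
          a ^ x.1 * b ^ x.2 *
            ((ichoose (m : ℤ) ((x.2 : ℤ) - 1) - ichoose (m : ℤ) ((x.1 : ℤ) - 1) : ℤ) : F)
          = (b - a) * (a + b) ^ m - (if m = p ^ n - 1 then b - a else 0) := by
        have hset : (Finset.range (p ^ n) ×ˢ Finset.range (p ^ n)).filter
            (fun x => x.1 + x.2 = m + 1)
            = (Finset.HasAntidiagonal.antidiagonal (m + 1)).filter (fun x => x.1 < p ^ n ∧ x.2 < p ^ n) := by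
          ext x
          simp only [Finset.mem_filter, Finset.mem_product, Finset.mem_range,
            Finset.HasAntidiagonal.mem_antidiagonal]
          tauto
        rw [hset, Finset.sum_filter, Finset.Nat.sum_antidiagonal_eq_sum_range_succ_mk]
        by_cases hcase : m = p ^ n - 1
        · rw [if_pos hcase]
          have hqm : p ^ n = m + 1 := by omega
          rw [Finset.sum_range_succ, Finset.sum_range_succ']
          rw [if_neg (by omega), if_neg (by omega), add_zero, add_zero]
          have hmid : ∀ k ∈ Finset.range m,
              (if k + 1 < p ^ n ∧ m + 1 - (k + 1) < p ^ n then
                a ^ (k+1) * b ^ (m + 1 - (k+1)) *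
                  ((ichoose (m : ℤ) (((m + 1 - (k+1) : ℕ) : ℤ) - 1)
                    - ichoose (m : ℤ) (((k+1 : ℕ) : ℤ) - 1) : ℤ) : F) else 0)
              = a ^ (k+1) * b ^ (m + 1 - (k+1)) *
                  ((ichoose (m : ℤ) ((m : ℤ) - ((k+1 : ℕ) : ℤ))
                    - ichoose (m : ℤ) (((k+1 : ℕ) : ℤ) - 1) : ℤ) : F) := by
            intro k hk
            have hk' : k < m := Finset.mem_range.mp hk
            rw [if_pos (by omega),
              show (((m + 1 - (k+1) : ℕ) : ℤ) - 1) = (m : ℤ) - ((k+1 : ℕ) : ℤ) by omega]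
          rw [Finset.sum_congr rfl hmid, core2 a b m]
          have hfa : a ^ (m + 1) = a := by rw [← hqm, ha]; exact hfrob α
          have hfb : b ^ (m + 1) = b := by rw [← hqm, hb]; exact hfrob β
          rw [hfa, hfb]
          ring
        · rw [if_neg hcase, sub_zero]
          have hterm : ∀ k ∈ Finset.range (m + 2),
              (if k < p ^ n ∧ m + 1 - k < p ^ n then
                a ^ k * b ^ (m + 1 - k) *
                  ((ichoose (m : ℤ) (((m + 1 - k : ℕ) : ℤ) - 1)
                    - ichoose (m : ℤ) ((k : ℤ) - 1) : ℤ) : F) else 0)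
              = a ^ k * b ^ (m + 1 - k) *
                  ((ichoose (m : ℤ) ((m : ℤ) - (k : ℤ))
                    - ichoose (m : ℤ) ((k : ℤ) - 1) : ℤ) : F) := by
            intro k hk
            have hk' : k < m + 2 := Finset.mem_range.mp hk
            rw [if_pos (by omega),
              show (((m + 1 - k : ℕ) : ℤ) - 1) = (m : ℤ) - (k : ℤ) by omega]
          rw [Finset.sum_congr rfl hterm, core a b m]
      rw [hscal, sub_smul, ite_smul, zero_smul]
    rw [Finset.sum_congr rfl hfib, Finset.sum_sub_distrib]
    have hite : ∑ m ∈ Finset.range (p ^ n),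
        (if m = p ^ n - 1 then (b - a) • E ((m : ℤ) - 1) else 0) = (b - a) • E R := by
      rw [Finset.sum_ite_eq' (Finset.range (p ^ n)) (p ^ n - 1)
        (fun m => (b - a) • E ((m : ℤ) - 1)), if_pos (Finset.mem_range.mpr (by omega))]
      congr 1
      congr 1
      rw [hRq]
      omega
    rw [hite]
  -- assembly
  rw [he α, he β, he (α + β), ← ha, ← hb]
  rw [map_add, ← ha, ← hb, map_sub, ← ha, ← hb]
  rw [lie_add, add_lie, add_lie, lie_self, key3, key1 a,
    show ⁅E R, ∑ s ∈ Finset.range (p ^ n), b ^ s • E ((s : ℤ) - 1)⁆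
      = -⁅∑ s ∈ Finset.range (p ^ n), b ^ s • E ((s : ℤ) - 1), E R⁆ from (lie_skew _ _).symm,
    key1 b, smul_add, Finset.smul_sum]
  have hT : ∀ m ∈ Finset.range (p ^ n),
      (b - a) • ((a + b) ^ m • E ((m : ℤ) - 1)) = ((b - a) * (a + b) ^ m) • E ((m : ℤ) - 1) := by
    intro m _; rw [smul_smul]
  rw [Finset.sum_congr rfl hT]
  module
end
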